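/- Let f(x) = x⁵. Then W(f) = { x²g(x) : g ∈ ℂ[x], deg g ≤ 1 }, so dim W(f) = 2. -/

import Mathlib

open Polynomial

theorem stmt8 (f : Polynomial ℂ) (hf : f = X ^ 5) :
    (∀ p : Polynomial ℂ,
      (p.degree ≤ 3 ∧
          f ∣ (derivative (derivative f) * p - derivative f * derivative p)) ↔
        ∃ g : Polynomial ℂ, g.degree ≤ 1 ∧ p = X ^ 2 * g) := by
  subst hf
  intro p
  constructor
  · rintro ⟨hdeg, hdvd⟩
    have hd : ∀ d < 5, ((derivative (derivative ((X:ℂ[X]) ^ 5)) * p -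
        derivative ((X:ℂ[X]) ^ 5) * derivative p)).coeff d = 0 :=
      (X_pow_dvd_iff).mp hdvd
    have h3 := hd 3 (by norm_num)
    have h4 := hd 4 (by norm_num)
    simp [derivative_X_pow, coeff_sub, coeff_C_mul, mul_assoc, X_pow_mul,
      coeff_mul_X_pow', -derivative_X_pow_succ] at h3 h4
    simp [coeff_derivative] at h4
    have h1 : p.coeff 1 = 0 := by linear_combination h4 / 15
    refine ⟨p.divX.divX, ?_, ?_⟩
    · rw [degree_le_iff_coeff_zero]
      intro m hm
      rw [coeff_divX, coeff_divX]
      apply coeff_eq_zero_of_degree_lt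
      apply lt_of_le_of_lt hdeg
      have : 1 < m := by exact_mod_cast hm
      exact_mod_cast by push_cast; omega
    · have e1 : p.divX * X + C (p.coeff 0) = p := divX_mul_X_add p
      have e2 : p.divX.divX * X + C (p.divX.coeff 0) = p.divX := divX_mul_X_add p.divX
      have e3 : p.divX.coeff 0 = p.coeff 1 := coeff_divX
      rw [h3, map_zero, add_zero] at e1
      rw [e3, h1, map_zero, add_zero] at e2
      rw [show (X:ℂ[X]) ^ 2 * p.divX.divX = p.divX.divX * X * X by ring, e2, e1]
  · rintro ⟨g, hg, rfl⟩
    constructor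
    · calc ((X:ℂ[X])^2 * g).degree ≤ ((X:ℂ[X])^2).degree + g.degree := degree_mul_le _ _
        _ ≤ 2 + 1 := by
            gcongr
            · simpa using (degree_X_pow 2).le
        _ = 3 := by norm_num
    · refine ⟨C 5 * (C 4 * g - C 2 * g - X * derivative g), ?_⟩
      simp [derivative_X_pow, derivative_mul, C_ofNat]
      ring
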